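/- Let G be a finite group of order n and let X₃ ⊆ X₂ ⊆ X₁ be symmetric subsets of G containing the identity such that X₃² ⊆ X₂, X₂² ⊆ X₁, X₁ is properly contained in G, and G is covered by at most k left-translates of X₃. Then G contains a product-free subset of size at least n/k. -/
import Mathlib


open Pointwise

/-- A subset `A` of a group is product-free if there are no `x, y, z ∈ A` with `x * y = z`. -/
def ProductFree {G : Type*} [Group G] (A : Set G) : Prop :=
  ∀ x ∈ A, ∀ y ∈ A, x * y ∉ A

theorem stmt_5 {G : Type*} [Group G] [Fintype G] (k : ℕ) (X₁ X₂ X₃ : Set G)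
    (h32 : X₃ ⊆ X₂) (h21 : X₂ ⊆ X₁)
    (hs1 : X₁⁻¹ = X₁) (hs2 : X₂⁻¹ = X₂) (hs3 : X₃⁻¹ = X₃)
    (h11 : (1 : G) ∈ X₁) (h12 : (1 : G) ∈ X₂) (h13 : (1 : G) ∈ X₃)
    (hsq3 : X₃ * X₃ ⊆ X₂) (hsq2 : X₂ * X₂ ⊆ X₁)
    (hproper : X₁ ≠ Set.univ)
    (hcov : ∃ T : Finset G, T.card ≤ k ∧ (Set.univ : Set G) ⊆ ⋃ g ∈ T, g • X₃) :
    ∃ A : Set G, ProductFree A ∧ (Fintype.card G : ℝ) / k ≤ (A.ncard : ℝ) := by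
  classical
  obtain ⟨g, hg⟩ := (Set.ne_univ_iff_exists_notMem _).1 hproper
  obtain ⟨T, hTk, hTcov⟩ := hcov
  refine ⟨g • X₃, ?_, ?_⟩
  · rintro x ⟨a, ha, rfl⟩ y ⟨b, hb, rfl⟩ ⟨c, hc, hcc⟩
    apply hg
    have hgeq : g = a⁻¹ * c * b⁻¹ := by
      have h : g * c = g * a * (g * b) := hcc
      rw [show g * a * (g * b) = g * (a * g * b) by group] at h
      have h2 := mul_left_cancel h
      rw [h2]; group
    rw [hgeq]
    have ha' : a⁻¹ ∈ X₃ := by rw [← hs3]; exact Set.inv_mem_inv.2 ha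
    have hb' : b⁻¹ ∈ X₃ := by rw [← hs3]; exact Set.inv_mem_inv.2 hb
    exact hsq2 (Set.mul_mem_mul (hsq3 (Set.mul_mem_mul ha' hc)) (h32 hb'))
  · -- size bound
    have hcard : Fintype.card G ≤ k * X₃.ncard := by
      have hsub : (Finset.univ : Finset G) ⊆ T.biUnion (fun g => (g • X₃).toFinset) := by
        intro x _
        have := hTcov (Set.mem_univ x)
        simp only [Set.mem_iUnion] at this
        obtain ⟨h, hh, hx⟩ := this
        exact Finset.mem_biUnion.2 ⟨h, hh, Set.mem_toFinset.2 hx⟩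
      have h1 : Fintype.card G ≤ T.card * X₃.ncard := by
        calc Fintype.card G = (Finset.univ : Finset G).card := rfl
          _ ≤ (T.biUnion (fun g => (g • X₃).toFinset)).card := Finset.card_le_card hsub
          _ ≤ T.card * X₃.ncard := by
              apply Finset.card_biUnion_le_card_mul
              intro a _
              rw [← Set.ncard_eq_toFinset_card', Set.ncard_smul_set]
      exact h1.trans (Nat.mul_le_mul_right _ hTk)
    have hA : (g • X₃).ncard = X₃.ncard := Set.ncard_smul_set g X₃
    rw [hA]
    rcases Nat.eq_zero_or_pos k with hk | hk
    · simp [hk]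
    · rw [div_le_iff₀ (by exact_mod_cast hk)]
      calc ((Fintype.card G : ℝ)) ≤ (k * X₃.ncard : ℕ) := by exact_mod_cast hcard
        _ = (X₃.ncard : ℝ) * k := by push_cast; ring
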